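/- Consider a switched matrix-weighted network on n nodes: for each k ∈ ℕ let L^k be a matrix-valued Laplacian (symmetric positive semidefinite with R ⊆ null(L^k)) and let the dwell times satisfy Δt_k ∈ [α, β] with 0 < α ≤ β. For an initial state x_0 ∈ ℝ^{dn} define the state at switching instants by x_{k+1} = exp(−Δt_k L^k) x_k. If for every initial state x_0 the sequence (x_k) converges to the average consensus value x_f = 1_n ⊗ ((1/n) Σ_{i=1}^n (x_0)_i), then there exists a strictly increasing sequence of indices k_0 = 0 < k_1 < k_2 < ⋯ such that for every l ∈ ℕ, the null space of the integral Laplacian Σ_{k=k_l}^{k_{l+1}−1} Δt_k L^k equals R. -/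

import Mathlib

open Matrix Finset Filter

/-- The matrix-valued Laplacian of a matrix-weighted graph on `n` nodes with
state dimension `d`: the `(i,j)` off-diagonal block is `-A i j` and the `i`-th
diagonal block is `∑ k ≠ i, A i k`. -/
noncomputable def mwLaplacian {n d : ℕ} (A : Fin n → Fin n → Matrix (Fin d) (Fin d) ℝ) :
    Matrix (Fin n × Fin d) (Fin n × Fin d) ℝ :=
  fun p q =>
    if p.1 = q.1 then ∑ k ∈ Finset.univ.erase p.1, A p.1 k p.2 q.2
    else -(A p.1 q.1 p.2 q.2)

/-- Membership in the consensus subspace `R = range (1ₙ ⊗ I_d)`: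
all blocks of `x` are equal. -/
def isConsensus {n d : ℕ} (x : Fin n × Fin d → ℝ) : Prop :=
  ∃ v : Fin d → ℝ, ∀ p : Fin n × Fin d, x p = v p.2

/-- The Euclidean norm on `ι → ℝ`. -/
noncomputable def euclNorm {ι : Type*} [Fintype ι] (x : ι → ℝ) : ℝ :=
  Real.sqrt (x ⬝ᵥ x)

/-- The state of the switched system at switching instants:
`x_0 = x0`, `x_{k+1} = E k ⬝ x_k`. -/
noncomputable def stateSeq {ι : Type*} [Fintype ι] [DecidableEq ι]
    (E : ℕ → Matrix ι ι ℝ) (x0 : ι → ℝ) : ℕ → ι → ℝ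
  | 0 => x0
  | k + 1 => (E k).mulVec (stateSeq E x0 k)

lemma dp_sum {ι κ : Type*} [Fintype ι] (s : Finset κ) (v : ι → ℝ) (f : κ → ι → ℝ) :
    v ⬝ᵥ (∑ k ∈ s, f k) = ∑ k ∈ s, v ⬝ᵥ f k := by
  simp only [dotProduct, Finset.sum_apply, Finset.mul_sum]
  exact Finset.sum_comm

/-- `M ↦ M.mulVec v` as a linear map. -/
noncomputable def mulVecL {ι : Type*} [Fintype ι] (v : ι → ℝ) :
    Matrix ι ι ℝ →ₗ[ℝ] (ι → ℝ) where
  toFun M := M.mulVec v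
  map_add' M N := Matrix.add_mulVec M N v
  map_smul' c M := Matrix.smul_mulVec c M v

lemma exp_mulVec_fixed {ι : Type*} [Fintype ι] [DecidableEq ι]
    (B : Matrix ι ι ℝ) (v : ι → ℝ) (hv : B.mulVec v = 0) :
    (NormedSpace.exp B).mulVec v = v := by
  letI : SeminormedRing (Matrix ι ι ℝ) := Matrix.linftyOpSemiNormedRing
  letI : NormedRing (Matrix ι ι ℝ) := Matrix.linftyOpNormedRing
  letI : NormedAlgebra ℝ (Matrix ι ι ℝ) := Matrix.linftyOpNormedAlgebra
  have hc : Continuous (mulVecL v) := (mulVecL v).continuous_of_finiteDimensional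
  let E : Matrix ι ι ℝ →L[ℝ] (ι → ℝ) := ⟨mulVecL v, hc⟩
  have hsum : Summable (fun k : ℕ => (k.factorial : ℝ)⁻¹ • B ^ k) :=
    NormedSpace.expSeries_summable' B
  have hexp : NormedSpace.exp B = ∑' k : ℕ, (k.factorial : ℝ)⁻¹ • B ^ k := by
    rw [NormedSpace.exp_eq_tsum (𝕂 := ℝ)]
  have hE : E (NormedSpace.exp B) = ∑' k : ℕ, E ((k.factorial : ℝ)⁻¹ • B ^ k) := by
    rw [hexp]; exact E.map_tsum hsum
  have hterm : ∀ k : ℕ, E ((k.factorial : ℝ)⁻¹ • B ^ k) = if k = 0 then v else 0 := by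
    intro k
    cases k with
    | zero => simp [E, mulVecL, Matrix.one_mulVec]
    | succ k =>
        have : (B ^ (k + 1)).mulVec v = 0 := by
          rw [pow_succ, ← Matrix.mulVec_mulVec, hv, Matrix.mulVec_zero]
        simp [E, mulVecL, this]
  have : E (NormedSpace.exp B) = v := by
    rw [hE]
    rw [tsum_eq_single 0 (by intro k hk; rw [hterm k, if_neg hk])]
    rw [hterm 0]; simp
  exact this

lemma exp_mulVec_surj {ι : Type*} [Fintype ι] [DecidableEq ι] (B : Matrix ι ι ℝ) :
    Function.Surjective ((NormedSpace.exp (-B)).mulVec) := by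
  intro y
  refine ⟨(NormedSpace.exp B).mulVec y, ?_⟩
  rw [Matrix.mulVec_mulVec,
    ← Matrix.exp_add_of_commute (-B) B (Commute.neg_left (Commute.refl B)),
    neg_add_cancel, NormedSpace.exp_zero, Matrix.one_mulVec]

/-- For a switched matrix-weighted network with Laplacians `L^k`
(symmetric PSD, `R ⊆ null(L^k)`) and dwell times `Δt k ∈ [α, β]`, `0 < α ≤ β`,
if every initial state converges to its average consensus value, then there is a
strictly increasing sequence of indices `k_0 = 0 < k_1 < ⋯` such that the integral
Laplacian `∑_{k=k_l}^{k_{l+1}-1} Δt_k L^k` has null space `R` for every `l`. -/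
theorem average_consensus_implies_null_subsequence {n d : ℕ} (hn : 2 ≤ n) (hd : 1 ≤ d)
    (L : ℕ → Matrix (Fin n × Fin d) (Fin n × Fin d) ℝ) (Δt : ℕ → ℝ) (α β : ℝ)
    (hα : 0 < α) (hαβ : α ≤ β) (hΔ : ∀ k, Δt k ∈ Set.Icc α β)
    (hpsd : ∀ k, (L k).PosSemidef)
    (hR : ∀ k, ∀ x : Fin n × Fin d → ℝ, isConsensus x → (L k).mulVec x = 0)
    (hconv : ∀ x0 : Fin n × Fin d → ℝ,
      Tendsto (stateSeq (fun k => NormedSpace.exp (-(Δt k • L k))) x0) atTop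
        (nhds (fun p => (n : ℝ)⁻¹ * ∑ i : Fin n, x0 (i, p.2)))) :
    ∃ ks : ℕ → ℕ, ks 0 = 0 ∧ StrictMono ks ∧
      ∀ l : ℕ, ∀ x : Fin n × Fin d → ℝ,
        ((∑ k ∈ Finset.Ico (ks l) (ks (l + 1)), Δt k • L k).mulVec x = 0
          ↔ isConsensus x) := by
  have hΔpos : ∀ k, 0 < Δt k := fun k => lt_of_lt_of_le hα (hΔ k).1
  set E : ℕ → Matrix (Fin n × Fin d) (Fin n × Fin d) ℝ :=
    fun k => NormedSpace.exp (-(Δt k • L k)) with hE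
  -- the per-switch maps fix common null vectors
  have hfix : ∀ k (x : Fin n × Fin d → ℝ), (L k).mulVec x = 0 → (E k).mulVec x = x := by
    intro k x hx
    apply exp_mulVec_fixed
    rw [Matrix.neg_mulVec, Matrix.smul_mulVec, hx, smul_zero, neg_zero]
  -- reachability: any state is realizable at any time
  have hreach : ∀ (m : ℕ) (w : Fin n × Fin d → ℝ), ∃ z, stateSeq E z m = w := by
    intro m
    induction m with
    | zero => exact fun w => ⟨w, rfl⟩
    | succ m ih =>
        intro w
        obtain ⟨y, hy⟩ := exp_mulVec_surj (Δt m • L m) w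
        obtain ⟨z, hz⟩ := ih y
        exact ⟨z, by show (E m).mulVec (stateSeq E z m) = w; rw [hz]; exact hy⟩
  -- key claim
  have key : ∀ m : ℕ, ∃ M, m < M ∧
      ∀ x : Fin n × Fin d → ℝ,
        (∀ k ∈ Finset.Ico m M, (L k).mulVec x = 0) → isConsensus x := by
    intro m
    by_contra hcon
    push_neg at hcon
    set S : ℕ → Submodule ℝ (Fin n × Fin d → ℝ) :=
      fun M => ⨅ k ∈ Finset.Ico m M, LinearMap.ker ((L k).mulVecLin) with hS
    have hmem : ∀ M (x : Fin n × Fin d → ℝ),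
        x ∈ S M ↔ ∀ k ∈ Finset.Ico m M, (L k).mulVec x = 0 := by
      intro M x
      simp [hS, Submodule.mem_iInf, LinearMap.mem_ker, Matrix.mulVecLin_apply]
    have hanti : ∀ {M M' : ℕ}, M ≤ M' → S M' ≤ S M := by
      intro M M' h x hx
      rw [hmem] at hx ⊢
      intro k hk
      exact hx k (Finset.mem_Ico.mpr ⟨(Finset.mem_Ico.mp hk).1,
        lt_of_lt_of_le (Finset.mem_Ico.mp hk).2 h⟩)
    -- choose M0 with minimal finrank
    have hne : (Set.range fun M => Module.finrank ℝ (S M)).Nonempty := ⟨_, ⟨0, rfl⟩⟩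
    obtain ⟨M0, hM0⟩ := Nat.sInf_mem hne
    have hstab : ∀ M, M0 ≤ M → S M = S M0 := by
      intro M h
      refine Submodule.eq_of_le_of_finrank_le (hanti h) ?_
      exact le_of_eq_of_le hM0 (Nat.sInf_le ⟨M, rfl⟩)
    set M1 := max (m + 1) M0 with hM1
    obtain ⟨x, hx1, hx2⟩ := hcon M1 (lt_of_lt_of_le (Nat.lt_succ_self m) (le_max_left _ _))
    have hxS : x ∈ S M1 := (hmem M1 x).mpr hx1
    have hx_all : ∀ k, m ≤ k → (L k).mulVec x = 0 := by
      intro k hk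
      have hmemk : x ∈ S (k + 1) := by
        by_cases h : k + 1 ≤ M1
        · exact hanti h hxS
        · push_neg at h
          rw [hstab (k + 1) (le_trans (le_max_right _ _) (le_of_lt h))]
          rw [← hstab M1 (le_max_right _ _)]
          exact hxS
      exact (hmem (k + 1) x).mp hmemk k
        (Finset.mem_Ico.mpr ⟨hk, Nat.lt_succ_self k⟩)
    obtain ⟨z, hz⟩ := hreach m x
    have hconst : ∀ k, m ≤ k → stateSeq E z k = x := by
      intro k hk
      induction k, hk using Nat.le_induction with
      | base => exact hz
      | succ k hk ih =>
          show (E k).mulVec (stateSeq E z k) = x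
          rw [ih]
          exact hfix k x (hx_all k hk)
    have htends : Tendsto (stateSeq E z) atTop (nhds x) := by
      refine tendsto_const_nhds.congr' ?_
      filter_upwards [eventually_ge_atTop m] with k hk
      exact (hconst k hk).symm
    have hxeq := tendsto_nhds_unique htends (hconv z)
    exact hx2 ⟨fun j => (n : ℝ)⁻¹ * ∑ i : Fin n, z (i, j), fun p => by rw [hxeq]⟩
  -- build the index sequence
  choose F hF1 hF2 using key
  refine ⟨fun l => Nat.rec 0 (fun _ prev => F prev) l, rfl,
    strictMono_nat_of_lt_succ (fun l => hF1 _), ?_⟩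
  intro l x
  set a : ℕ := Nat.rec 0 (fun _ prev => F prev) l with ha
  show (∑ k ∈ Finset.Ico a (F a), Δt k • L k).mulVec x = 0 ↔ isConsensus x
  constructor
  · intro h
    apply hF2 a x
    intro k hk
    -- from PSD: each term is killed
    have hdp : ∑ j ∈ Finset.Ico a (F a), Δt j * (x ⬝ᵥ (L j).mulVec x) = 0 := by
      have hsum : (∑ k ∈ Finset.Ico a (F a), Δt k • L k).mulVec x
          = ∑ k ∈ Finset.Ico a (F a), Δt k • (L k).mulVec x := by
        rw [show (∑ k ∈ Finset.Ico a (F a), Δt k • L k).mulVec x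
            = mulVecL x (∑ k ∈ Finset.Ico a (F a), Δt k • L k) from rfl,
          map_sum]
        simp [mulVecL]
      have := congrArg (fun w => x ⬝ᵥ w) (hsum ▸ h)
      simpa [dp_sum, dotProduct_smul, smul_eq_mul] using this
    have hnonneg : ∀ j ∈ Finset.Ico a (F a), 0 ≤ Δt j * (x ⬝ᵥ (L j).mulVec x) := by
      intro j _
      have := (hpsd j).dotProduct_mulVec_nonneg x
      simp only [star_trivial] at this
      exact mul_nonneg (le_of_lt (hΔpos j)) this
    have hzero := (Finset.sum_eq_zero_iff_of_nonneg hnonneg).mp hdp k hk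
    have hq : x ⬝ᵥ (L k).mulVec x = 0 :=
      (mul_eq_zero.mp hzero).resolve_left (ne_of_gt (hΔpos k))
    have := ((hpsd k).dotProduct_mulVec_zero_iff x).mp (by simpa [star_trivial] using hq)
    exact this
  · intro hx
    rw [show (∑ k ∈ Finset.Ico a (F a), Δt k • L k).mulVec x
        = mulVecL x (∑ k ∈ Finset.Ico a (F a), Δt k • L k) from rfl, map_sum]
    apply Finset.sum_eq_zero
    intro k _
    show (Δt k • L k).mulVec x = 0
    rw [Matrix.smul_mulVec, hR k x hx, smul_zero]
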